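/- Every graph G satisfies si(G) ≤ pw(G)² + pw(G), where pw is pathwidth. -/
import Mathlib


/-- `(a, b, L)` is a `d`-simultaneous interval representation of `G`:
each vertex `v` gets a nonempty open interval `(a v, b v)` and a label set
`L v ⊆ {1,…,d}`, and distinct vertices are adjacent iff both their intervals
and their label sets intersect. -/
def IsSIRep {V : Type*} (G : SimpleGraph V) (d : ℕ)
    (a b : V → ℝ) (L : V → Finset (Fin d)) : Prop :=
  (∀ v, a v < b v) ∧
  ∀ u v : V, u ≠ v →
    (G.Adj u v ↔ (Set.Ioo (a u) (b u) ∩ Set.Ioo (a v) (b v)).Nonempty ∧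
      (L u ∩ L v).Nonempty)

/-- The simultaneous interval number of `G`. -/
noncomputable def si {V : Type*} (G : SimpleGraph V) : ℕ :=
  sInf {d | ∃ a b L, IsSIRep G d a b L}

/-- A path decomposition of `G` with bags `X 0, …, X (p-1)`. -/
def IsPathDecomp {V : Type*} (G : SimpleGraph V) (p : ℕ) (X : Fin p → Finset V) : Prop :=
  (∀ v, ∃ i, v ∈ X i) ∧
  (∀ u v, G.Adj u v → ∃ i, u ∈ X i ∧ v ∈ X i) ∧
  (∀ v, ∀ i j l : Fin p, i ≤ j → j ≤ l → v ∈ X i → v ∈ X l → v ∈ X j)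

/-- `S` is an independent set in `G`. -/
def IsIndepSet {V : Type*} (G : SimpleGraph V) (S : Finset V) : Prop :=
  ∀ u ∈ S, ∀ v ∈ S, u ≠ v → ¬ G.Adj u v

/-- The path-independence number of `G`. -/
noncomputable def pathAlpha {V : Type*} (G : SimpleGraph V) : ℕ :=
  sInf {k | ∃ (p : ℕ) (X : Fin p → Finset V), IsPathDecomp G p X ∧
    ∀ (i : Fin p) (S : Finset V), S ⊆ X i → IsIndepSet G S → S.card ≤ k}

/-- The pathwidth of `G`. -/
noncomputable def pathwidth {V : Type*} (G : SimpleGraph V) : ℕ :=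
  sInf {w | ∃ (p : ℕ) (X : Fin p → Finset V), IsPathDecomp G p X ∧
    ∀ i, (X i).card ≤ w + 1}

namespace SIAux

variable {V : Type*} [Fintype V] {G : SimpleGraph V} {p : ℕ} {X : Fin p → Finset V}

open Classical in
/-- The set of bags containing `v`. -/
noncomputable def bags (X : Fin p → Finset V) (v : V) : Finset (Fin p) :=
  Finset.univ.filter (fun i => v ∈ X i)

theorem mem_bags {v : V} {i : Fin p} : i ∈ bags X v ↔ v ∈ X i := by
  simp [bags]

theorem bags_nonempty (hd : IsPathDecomp G p X) (v : V) : (bags X v).Nonempty := by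
  obtain ⟨i, hi⟩ := hd.1 v
  exact ⟨i, mem_bags.2 hi⟩

/-- The first bag containing `v`. -/
noncomputable def lo (hd : IsPathDecomp G p X) (v : V) : Fin p :=
  (bags X v).min' (bags_nonempty hd v)

/-- The last bag containing `v`. -/
noncomputable def hi (hd : IsPathDecomp G p X) (v : V) : Fin p :=
  (bags X v).max' (bags_nonempty hd v)

theorem mem_X_lo (hd : IsPathDecomp G p X) (v : V) : v ∈ X (lo hd v) :=
  mem_bags.1 ((bags X v).min'_mem _)

theorem mem_X_hi (hd : IsPathDecomp G p X) (v : V) : v ∈ X (hi hd v) :=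
  mem_bags.1 ((bags X v).max'_mem _)

theorem lo_le (hd : IsPathDecomp G p X) {v : V} {i : Fin p} (h : v ∈ X i) : lo hd v ≤ i :=
  Finset.min'_le _ _ (mem_bags.2 h)

theorem le_hi (hd : IsPathDecomp G p X) {v : V} {i : Fin p} (h : v ∈ X i) : i ≤ hi hd v :=
  Finset.le_max' _ _ (mem_bags.2 h)

theorem lo_le_hi (hd : IsPathDecomp G p X) (v : V) : lo hd v ≤ hi hd v :=
  lo_le hd (mem_X_hi hd v)

theorem mem_X_of (hd : IsPathDecomp G p X) {v : V} {i : Fin p}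
    (h1 : lo hd v ≤ i) (h2 : i ≤ hi hd v) : v ∈ X i :=
  hd.2.2 v _ i _ h1 h2 (mem_X_lo hd v) (mem_X_hi hd v)

/-- Two vertices share a bag. -/
def ovl (X : Fin p → Finset V) (u v : V) : Prop := ∃ i, u ∈ X i ∧ v ∈ X i

theorem ovl_symm {u v : V} (h : ovl X u v) : ovl X v u := by
  obtain ⟨i, h1, h2⟩ := h; exact ⟨i, h2, h1⟩

theorem ovl_iff (hd : IsPathDecomp G p X) {u v : V} :
    ovl X u v ↔ lo hd u ≤ hi hd v ∧ lo hd v ≤ hi hd u := by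
  constructor
  · rintro ⟨i, hu, hv⟩
    exact ⟨(lo_le hd hu).trans (le_hi hd hv), (lo_le hd hv).trans (le_hi hd hu)⟩
  · rintro ⟨h1, h2⟩
    refine ⟨max (lo hd u) (lo hd v), mem_X_of hd (le_max_left _ _) ?_,
      mem_X_of hd (le_max_right _ _) ?_⟩
    · exact max_le (lo_le_hi hd u) h2
    · exact max_le h1 (lo_le_hi hd v)

/-- An injective measure on vertices, ordering them primarily by first bag. -/
noncomputable def msr (hd : IsPathDecomp G p X) (v : V) : ℕ :=
  (lo hd v : ℕ) * Fintype.card V + ((Fintype.equivFin V) v : ℕ)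

theorem msr_inj (hd : IsPathDecomp G p X) {u v : V} (h : msr hd u = msr hd v) : u = v := by
  have hu : (((Fintype.equivFin V) u : Fin _) : ℕ) < Fintype.card V := ((Fintype.equivFin V) u).isLt
  have hv : (((Fintype.equivFin V) v : Fin _) : ℕ) < Fintype.card V := ((Fintype.equivFin V) v).isLt
  have he : (((Fintype.equivFin V) u : Fin _) : ℕ) = (((Fintype.equivFin V) v : Fin _) : ℕ) := by
    have h2 := congrArg (· % Fintype.card V) h
    simpa [msr, Nat.mul_add_mod_of_lt hu, Nat.mul_add_mod_of_lt hv] using h2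
  exact (Fintype.equivFin V).injective (Fin.ext he)

theorem lo_le_of_msr_lt (hd : IsPathDecomp G p X) {u v : V} (h : msr hd u < msr hd v) :
    lo hd u ≤ lo hd v := by
  by_contra hlt
  push_neg at hlt
  have h1 : (lo hd v : ℕ) + 1 ≤ (lo hd u : ℕ) := Fin.lt_def.1 hlt
  have h2 : (((Fintype.equivFin V) v : Fin _) : ℕ) < Fintype.card V := ((Fintype.equivFin V) v).isLt
  have h3 : msr hd v < msr hd u := by
    calc msr hd v < (lo hd v : ℕ) * Fintype.card V + Fintype.card V := by
          unfold msr; omega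
    _ = ((lo hd v : ℕ) + 1) * Fintype.card V := by ring
    _ ≤ (lo hd u : ℕ) * Fintype.card V := Nat.mul_le_mul_right _ h1
    _ ≤ msr hd u := Nat.le_add_right _ _
  omega

theorem mem_X_lo_of (hd : IsPathDecomp G p X) {u v : V} (ho : ovl X u v)
    (h : msr hd u < msr hd v) : u ∈ X (lo hd v) := by
  obtain ⟨i, hu, hv⟩ := ho
  exact mem_X_of hd (lo_le_of_msr_lt hd h) ((lo_le hd hv).trans (le_hi hd hu))

/-- Greedy slot assignment: vertices sharing a bag get distinct slots. -/
noncomputable def slot (hd : IsPathDecomp G p X) : V → ℕ :=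
  WellFounded.fix (InvImage.wf (msr hd) (wellFounded_lt))
    (fun v ih => sInf {c : ℕ | ∀ u, (h : msr hd u < msr hd v) → ovl X u v → ih u h ≠ c})

theorem slot_def (hd : IsPathDecomp G p X) (v : V) :
    slot hd v = sInf {c : ℕ | ∀ u, msr hd u < msr hd v → ovl X u v → slot hd u ≠ c} := by
  unfold slot
  exact WellFounded.fix_eq _ _ _

theorem slot_aux (hd : IsPathDecomp G p X) {w : ℕ} (hc : ∀ i, (X i).card ≤ w + 1) (v : V) :
    slot hd v ≤ w ∧ ∀ u, msr hd u < msr hd v → ovl X u v → slot hd u ≠ slot hd v := by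
  classical
  set T : Finset ℕ := ((X (lo hd v)).erase v).image (slot hd) with hT
  have hTcard : T.card ≤ w := by
    calc T.card ≤ ((X (lo hd v)).erase v).card := Finset.card_image_le
    _ = (X (lo hd v)).card - 1 := Finset.card_erase_of_mem (mem_X_lo hd v)
    _ ≤ w := by have := hc (lo hd v); omega
  obtain ⟨c, hcr, hcT⟩ : ∃ c ∈ Finset.range (w + 1), c ∉ T := by
    by_contra hcon
    push_neg at hcon
    have hsub : Finset.range (w + 1) ⊆ T := fun c hc' => hcon c hc'
    have := Finset.card_le_card hsub
    rw [Finset.card_range] at this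
    omega
  have hcS : c ∈ {c : ℕ | ∀ u, msr hd u < msr hd v → ovl X u v → slot hd u ≠ c} := by
    intro u hm ho heq
    apply hcT
    refine Finset.mem_image.2 ⟨u, Finset.mem_erase.2 ⟨?_, mem_X_lo_of hd ho hm⟩, heq⟩
    intro he; subst he; exact lt_irrefl _ hm
  constructor
  · have h1 : slot hd v ≤ c := by rw [slot_def]; exact Nat.sInf_le hcS
    have h2 : c ≤ w := by have := Finset.mem_range.1 hcr; omega
    omega
  · have h2 := Nat.sInf_mem
      (⟨c, hcS⟩ : {c : ℕ | ∀ u, msr hd u < msr hd v → ovl X u v → slot hd u ≠ c}.Nonempty)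
    rw [← slot_def hd v] at h2
    exact h2

theorem slot_ne (hd : IsPathDecomp G p X) {w : ℕ} (hc : ∀ i, (X i).card ≤ w + 1)
    {u v : V} (hne : u ≠ v) (ho : ovl X u v) : slot hd u ≠ slot hd v := by
  have hm : msr hd u ≠ msr hd v := fun h => hne (msr_inj hd h)
  rcases hm.lt_or_gt with h | h
  · exact (slot_aux hd hc v).2 u h ho
  · exact fun e => (slot_aux hd hc u).2 v h (ovl_symm ho) e.symm

open Classical in
/-- Parity counter: number (mod 2) of non-edges among overlapping pairs on the
"parent chain" leading to `v` through the slot class `β`. -/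
noncomputable def bpar (hd : IsPathDecomp G p X) : V → ℕ → ℕ :=
  WellFounded.fix (InvImage.wf (msr hd) (wellFounded_lt))
    (fun v ih => fun β =>
      if h : ∃ u, slot hd u = β ∧ ovl X u v ∧ msr hd u < msr hd v then
        ih h.choose h.choose_spec.2.2 (slot hd v) + (if G.Adj h.choose v then 0 else 1)
      else 0)

open Classical in
theorem bpar_parent (hd : IsPathDecomp G p X) {w : ℕ} (hc : ∀ i, (X i).card ≤ w + 1)
    {β : ℕ} {u v : V} (hs : slot hd u = β) (ho : ovl X u v) (hm : msr hd u < msr hd v) :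
    bpar hd v β = bpar hd u (slot hd v) + (if G.Adj u v then 0 else 1) := by
  have hex : ∃ u', slot hd u' = β ∧ ovl X u' v ∧ msr hd u' < msr hd v := ⟨u, hs, ho, hm⟩
  have hch : hex.choose = u := by
    obtain ⟨h1, h2, h3⟩ := hex.choose_spec
    by_contra hne
    exact slot_ne hd hc hne ⟨lo hd v, mem_X_lo_of hd h2 h3, mem_X_lo_of hd ho hm⟩
      (h1.trans hs.symm)
  unfold bpar
  rw [WellFounded.fix_eq]
  simp only [dif_pos hex, hch]

theorem bpar_adj (hd : IsPathDecomp G p X) {w : ℕ} (hc : ∀ i, (X i).card ≤ w + 1)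
    {u v : V} (ha : G.Adj u v) : bpar hd u (slot hd v) = bpar hd v (slot hd u) := by
  have ho : ovl X u v := hd.2.1 u v ha
  have hm : msr hd u ≠ msr hd v := fun h => ha.ne (msr_inj hd h)
  rcases hm.lt_or_gt with h | h
  · have h2 := bpar_parent hd hc (rfl : slot hd u = slot hd u) ho h
    rw [if_pos ha] at h2
    omega
  · have h2 := bpar_parent hd hc (rfl : slot hd v = slot hd v) (ovl_symm ho) h
    rw [if_pos ha.symm] at h2
    omega

theorem bpar_bad (hd : IsPathDecomp G p X) {w : ℕ} (hc : ∀ i, (X i).card ≤ w + 1)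
    {u v : V} (hn : ¬ G.Adj u v) (hne : u ≠ v) (ho : ovl X u v) :
    bpar hd u (slot hd v) % 2 ≠ bpar hd v (slot hd u) % 2 := by
  have hm : msr hd u ≠ msr hd v := fun h => hne (msr_inj hd h)
  rcases hm.lt_or_gt with h | h
  · have h2 := bpar_parent hd hc (rfl : slot hd u = slot hd u) ho h
    rw [if_neg hn] at h2
    omega
  · have h2 := bpar_parent hd hc (rfl : slot hd v = slot hd v) (ovl_symm ho) h
    rw [if_neg (fun h' => hn h'.symm)] at h2
    omega

/-- Encoding of an ordered pair of distinct slots `a ≠ b`, both `≤ w`, into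
`Fin (w^2 + w)`. -/
def ocode (w a b : ℕ) : ℕ := a * w + (if b < a then b else b - 1)

theorem ocode_lt {w a b : ℕ} (hw : 1 ≤ w) (ha : a ≤ w) (hb : b ≤ w) (hab : a ≠ b) :
    ocode w a b < w ^ 2 + w := by
  have h1 : (if b < a then b else b - 1) < w := by split_ifs <;> omega
  have h2 : a * w ≤ w * w := Nat.mul_le_mul_right _ ha
  have h3 : w * w = w ^ 2 := (sq w).symm
  unfold ocode
  omega

theorem ocode_inj {w a b a' b' : ℕ} (hw : 1 ≤ w) (ha : a ≤ w) (hb : b ≤ w) (hab : a ≠ b)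
    (ha' : a' ≤ w) (hb' : b' ≤ w) (hab' : a' ≠ b')
    (h : ocode w a b = ocode w a' b') : a = a' ∧ b = b' := by
  have h1 : (if b < a then b else b - 1) < w := by split_ifs <;> omega
  have h2 : (if b' < a' then b' else b' - 1) < w := by split_ifs <;> omega
  have key : ∀ x y u' v' : ℕ, x < y → u' < w → x * w + u' < y * w + v' := by
    intro x y u' v' hxy hu'
    calc x * w + u' < x * w + w := by omega
    _ = (x + 1) * w := by ring
    _ ≤ y * w := Nat.mul_le_mul_right _ hxy
    _ ≤ y * w + v' := Nat.le_add_right _ _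
  have haa : a = a' := by
    rcases lt_trichotomy a a' with h3 | h3 | h3
    · exact absurd h (Nat.ne_of_lt (key _ _ _ _ h3 h1))
    · exact h3
    · exact absurd h.symm (Nat.ne_of_lt (key _ _ _ _ h3 h2))
  subst haa
  unfold ocode at h
  constructor
  · rfl
  · split_ifs at h <;> omega

open Classical in
/-- The label attached to the edge `uv`. -/
noncomputable def lab (hd : IsPathDecomp G p X) (w : ℕ) (u v : V) : ℕ :=
  if bpar hd u (slot hd v) % 2 = 0 then
    ocode w (min (slot hd u) (slot hd v)) (max (slot hd u) (slot hd v))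
  else
    ocode w (max (slot hd u) (slot hd v)) (min (slot hd u) (slot hd v))

theorem lab_symm (hd : IsPathDecomp G p X) {w : ℕ} (hc : ∀ i, (X i).card ≤ w + 1)
    {u v : V} (ha : G.Adj u v) : lab hd w u v = lab hd w v u := by
  unfold lab
  rw [bpar_adj hd hc ha, min_comm (slot hd u), max_comm (slot hd u)]

theorem lab_lt (hd : IsPathDecomp G p X) {w : ℕ} (hw : 1 ≤ w)
    (hc : ∀ i, (X i).card ≤ w + 1) {u v : V} (hne : slot hd u ≠ slot hd v) :
    lab hd w u v < w ^ 2 + w := by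
  have hu : slot hd u ≤ w := (slot_aux hd hc u).1
  have hv : slot hd v ≤ w := (slot_aux hd hc v).1
  have h1 : min (slot hd u) (slot hd v) ≤ w := by omega
  have h2 : max (slot hd u) (slot hd v) ≤ w := by omega
  have h3 : min (slot hd u) (slot hd v) ≠ max (slot hd u) (slot hd v) := by omega
  unfold lab
  split_ifs
  · exact ocode_lt hw h1 h2 h3
  · exact ocode_lt hw h2 h1 h3.symm

theorem lab_decode (hd : IsPathDecomp G p X) {w : ℕ} (hw : 1 ≤ w)
    (hc : ∀ i, (X i).card ≤ w + 1) {x u y v : V}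
    (h1 : slot hd x ≠ slot hd u) (h2 : slot hd y ≠ slot hd v)
    (h : lab hd w x u = lab hd w y v) :
    (min (slot hd x) (slot hd u) = min (slot hd y) (slot hd v) ∧
      max (slot hd x) (slot hd u) = max (slot hd y) (slot hd v)) ∧
    bpar hd x (slot hd u) % 2 = bpar hd y (slot hd v) % 2 := by
  have hx : slot hd x ≤ w := (slot_aux hd hc x).1
  have hu : slot hd u ≤ w := (slot_aux hd hc u).1
  have hy : slot hd y ≤ w := (slot_aux hd hc y).1
  have hv : slot hd v ≤ w := (slot_aux hd hc v).1
  have hm1 : min (slot hd x) (slot hd u) ≤ w := by omega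
  have hm2 : max (slot hd x) (slot hd u) ≤ w := by omega
  have hm3 : min (slot hd x) (slot hd u) ≠ max (slot hd x) (slot hd u) := by omega
  have hm4 : min (slot hd y) (slot hd v) ≤ w := by omega
  have hm5 : max (slot hd y) (slot hd v) ≤ w := by omega
  have hm6 : min (slot hd y) (slot hd v) ≠ max (slot hd y) (slot hd v) := by omega
  unfold lab at h
  split_ifs at h with t1 t2 t2
  · obtain ⟨e1, e2⟩ := ocode_inj hw hm1 hm2 hm3 hm4 hm5 hm6 h
    exact ⟨⟨e1, e2⟩, by omega⟩
  · obtain ⟨e1, e2⟩ := ocode_inj hw hm1 hm2 hm3 hm5 hm4 hm6.symm h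
    exfalso; omega
  · obtain ⟨e1, e2⟩ := ocode_inj hw hm2 hm1 hm3.symm hm4 hm5 hm6 h
    exfalso; omega
  · obtain ⟨e1, e2⟩ := ocode_inj hw hm2 hm1 hm3.symm hm5 hm4 hm6.symm h
    exact ⟨⟨e2, e1⟩, by omega⟩

end SIAux

/-- Every graph satisfies `si(G) ≤ pw(G)² + pw(G)`. -/
theorem si_le_pathwidth_sq_add_pathwidth {V : Type*} [Fintype V]
    (G : SimpleGraph V) :
    si G ≤ pathwidth G ^ 2 + pathwidth G := by
  classical
  open SIAux in
  -- The defining set of the pathwidth is nonempty: one bag containing everything.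
  have hne : {w | ∃ (p : ℕ) (X : Fin p → Finset V), IsPathDecomp G p X ∧
      ∀ i, (X i).card ≤ w + 1}.Nonempty := by
    refine ⟨Fintype.card V, 1, fun _ => Finset.univ,
      ⟨fun v => ⟨0, Finset.mem_univ v⟩,
       fun u v _ => ⟨0, Finset.mem_univ u, Finset.mem_univ v⟩,
       fun v i j l _ _ _ _ => Finset.mem_univ v⟩, fun i => ?_⟩
    rw [Finset.card_univ]
    omega
  have hmem : pathwidth G ∈ {w | ∃ (p : ℕ) (X : Fin p → Finset V), IsPathDecomp G p X ∧
      ∀ i, (X i).card ≤ w + 1} := by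
    rw [pathwidth]
    exact Nat.sInf_mem hne
  obtain ⟨p, X, hd, hc⟩ := hmem
  set w := pathwidth G with hwdef
  have hrep : ∃ a b L, IsSIRep G (w ^ 2 + w) a b L := by
    by_cases hw0 : w = 0
    · -- no edges are possible; empty label sets work
      refine ⟨fun _ => 0, fun _ => 1, fun _ => ∅, fun v => zero_lt_one, fun u v huv => ?_⟩
      constructor
      · intro hadj
        exfalso
        obtain ⟨i, hu, hv⟩ := hd.2.1 u v hadj
        have h2 : 1 < (X i).card := Finset.one_lt_card.2 ⟨u, hu, v, hv, huv⟩
        have h3 := hc i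
        omega
      · rintro ⟨-, c, hc'⟩
        simp at hc'
    · have hw1 : 1 ≤ w := Nat.one_le_iff_ne_zero.2 hw0
      refine ⟨fun v => ((lo hd v : ℕ) : ℝ), fun v => ((hi hd v : ℕ) : ℝ) + 1,
        fun v => Finset.univ.filter
          (fun c : Fin (w ^ 2 + w) => ∃ z, G.Adj z v ∧ lab hd w z v = (c : ℕ)),
        ?_, ?_⟩
      · intro v
        have h : (lo hd v : ℕ) ≤ (hi hd v : ℕ) := Fin.le_def.1 (lo_le_hi hd v)
        have h2 : ((lo hd v : ℕ) : ℝ) ≤ ((hi hd v : ℕ) : ℝ) := by exact_mod_cast h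
        show ((lo hd v : ℕ) : ℝ) < ((hi hd v : ℕ) : ℝ) + 1
        linarith
      · intro u v huv
        constructor
        · intro hadj
          obtain ⟨i, hu, hv⟩ := hd.2.1 u v hadj
          have hsne : slot hd u ≠ slot hd v := slot_ne hd hc huv ⟨i, hu, hv⟩
          constructor
          · -- intervals intersect
            rw [Set.Ioo_inter_Ioo, Set.nonempty_Ioo]
            dsimp only
            have k1 : (lo hd u : ℕ) ≤ (hi hd u : ℕ) := Fin.le_def.1 (lo_le_hi hd u)
            have k2 : (lo hd v : ℕ) ≤ (hi hd v : ℕ) := Fin.le_def.1 (lo_le_hi hd v)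
            have k3 : (lo hd u : ℕ) ≤ (hi hd v : ℕ) :=
              Fin.le_def.1 ((lo_le hd hu).trans (le_hi hd hv))
            have k4 : (lo hd v : ℕ) ≤ (hi hd u : ℕ) :=
              Fin.le_def.1 ((lo_le hd hv).trans (le_hi hd hu))
            rw [max_lt_iff]
            constructor <;> rw [lt_min_iff] <;> constructor
            · have : ((lo hd u : ℕ) : ℝ) ≤ ((hi hd u : ℕ) : ℝ) := by exact_mod_cast k1
              linarith
            · have : ((lo hd u : ℕ) : ℝ) ≤ ((hi hd v : ℕ) : ℝ) := by exact_mod_cast k3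
              linarith
            · have : ((lo hd v : ℕ) : ℝ) ≤ ((hi hd u : ℕ) : ℝ) := by exact_mod_cast k4
              linarith
            · have : ((lo hd v : ℕ) : ℝ) ≤ ((hi hd v : ℕ) : ℝ) := by exact_mod_cast k2
              linarith
          · -- label sets intersect
            refine ⟨⟨lab hd w u v, lab_lt hd hw1 hc hsne⟩, Finset.mem_inter.2 ⟨?_, ?_⟩⟩
            · refine Finset.mem_filter.2 ⟨Finset.mem_univ _, ⟨v, hadj.symm, ?_⟩⟩
              exact lab_symm hd hc hadj.symm
            · exact Finset.mem_filter.2 ⟨Finset.mem_univ _, ⟨u, hadj, rfl⟩⟩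
        · rintro ⟨hIoo, c, hcmem⟩
          by_contra hnadj
          rw [Finset.mem_inter] at hcmem
          obtain ⟨hcu, hcv⟩ := hcmem
          obtain ⟨-, x, hxadj, hxlab⟩ := Finset.mem_filter.1 hcu
          obtain ⟨-, y, hyadj, hylab⟩ := Finset.mem_filter.1 hcv
          -- `u` and `v` share a bag
          have ho : ovl X u v := by
            rw [Set.Ioo_inter_Ioo, Set.nonempty_Ioo, max_lt_iff] at hIoo
            obtain ⟨hA, hB⟩ := hIoo
            rw [lt_min_iff] at hA hB
            have k3 : (lo hd u : ℕ) ≤ (hi hd v : ℕ) := by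
              have := hA.2
              have h4 : ((lo hd u : ℕ) : ℝ) < ((hi hd v : ℕ) : ℝ) + 1 := this
              have h5 : (lo hd u : ℕ) < (hi hd v : ℕ) + 1 := by exact_mod_cast h4
              omega
            have k4 : (lo hd v : ℕ) ≤ (hi hd u : ℕ) := by
              have := hB.1
              have h4 : ((lo hd v : ℕ) : ℝ) < ((hi hd u : ℕ) : ℝ) + 1 := this
              have h5 : (lo hd v : ℕ) < (hi hd u : ℕ) + 1 := by exact_mod_cast h4
              omega
            exact (ovl_iff hd).2 ⟨Fin.le_def.2 k3, Fin.le_def.2 k4⟩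
          have hsuv : slot hd u ≠ slot hd v := slot_ne hd hc huv ho
          have hsxu : slot hd x ≠ slot hd u :=
            slot_ne hd hc hxadj.ne (hd.2.1 _ _ hxadj)
          have hsyv : slot hd y ≠ slot hd v :=
            slot_ne hd hc hyadj.ne (hd.2.1 _ _ hyadj)
          obtain ⟨⟨e1, e2⟩, epar⟩ :=
            lab_decode hd hw1 hc hsxu hsyv (hxlab.trans hylab.symm)
          -- deduce `slot x = slot v` and `slot y = slot u`
          have hxv : slot hd x = slot hd v ∧ slot hd u = slot hd y := by omega
          have t1 : bpar hd x (slot hd u) % 2 = bpar hd u (slot hd v) % 2 := by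
            rw [bpar_adj hd hc hxadj, hxv.1]
          have t2 : bpar hd y (slot hd v) % 2 = bpar hd v (slot hd u) % 2 := by
            rw [bpar_adj hd hc hyadj, ← hxv.2]
          have hbad := bpar_bad hd hc hnadj huv ho
          omega
  rw [si]
  exact Nat.sInf_le hrep
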